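/- Fix data and suppose: (i) (β₀, t(β₀)) is feasible for the optimization problem min ‖β‖₁ + λ_t‖t‖_∞ subject to |(1/n)Σ z_{iℓ}(y_i − x_i'β)| ≤ τ t_ℓ and {(1/n)Σ z_{iℓ}²(y_i − x_i'β)²}^{1/2} ≤ t_ℓ for all ℓ, (ii) (β̂, t̂) is an optimal solution, (iii) |t_ℓ(β̂) − t_ℓ(β₀)| ≤ H_n‖β̂ − β₀‖₁ for all ℓ, and (iv) λ_t = 1/(2H_n). Then β̂ − β₀ lies in the cone: ‖β̂_{T^c}‖₁ ≤ 3‖(β₀ − β̂)_T‖₁, where T = support(β₀). -/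

import Mathlib

/-- Cone membership of the pivotal estimator's error: under feasibility of `β₀`,
optimality of `(β̂, t̂)`, the Lipschitz bound on `t`, and `lam = 1/(2H_n)`, the
error lies in the cone `‖β̂_{T^c}‖₁ ≤ 3‖(β₀−β̂)_T‖₁` with `T = support(β₀)`. -/
theorem pivotal_cone_membership {n K p : ℕ} (hn : 0 < n) (hK : 0 < K)
    (y : Fin n → ℝ) (x : Fin n → Fin p → ℝ) (z : Fin n → Fin K → ℝ)
    (βh β0 : Fin p → ℝ) (th : Fin K → ℝ) (τ lam Hn : ℝ)
    (hHn : 0 < Hn) (hlam : lam = 1 / (2 * Hn)) (hτ : 0 ≤ τ)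
    -- feasibility of (β₀, t(β₀)):
    (hfeas0 : ∀ ℓ : Fin K,
      |(1 / n : ℝ) * ∑ i, z i ℓ * (y i - ∑ l, x i l * β0 l)| ≤
        τ * Real.sqrt ((1 / n : ℝ) * ∑ i, (z i ℓ) ^ 2 * (y i - ∑ l, x i l * β0 l) ^ 2))
    -- feasibility of (β̂, t̂) in the second-moment constraints:
    (hfeash : ∀ ℓ : Fin K,
      Real.sqrt ((1 / n : ℝ) * ∑ i, (z i ℓ) ^ 2 * (y i - ∑ l, x i l * βh l) ^ 2) ≤ th ℓ)
    -- optimality of (β̂, t̂):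
    (hopt : (∑ l, |βh l|) + lam * (⨆ ℓ : Fin K, th ℓ) ≤
      (∑ l, |β0 l|) + lam * ⨆ ℓ : Fin K,
        Real.sqrt ((1 / n : ℝ) * ∑ i, (z i ℓ) ^ 2 * (y i - ∑ l, x i l * β0 l) ^ 2))
    -- Lipschitz bound:
    (hlip : ∀ ℓ : Fin K,
      |Real.sqrt ((1 / n : ℝ) * ∑ i, (z i ℓ) ^ 2 * (y i - ∑ l, x i l * βh l) ^ 2) -
          Real.sqrt ((1 / n : ℝ) * ∑ i, (z i ℓ) ^ 2 * (y i - ∑ l, x i l * β0 l) ^ 2)| ≤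
        Hn * ∑ l, |βh l - β0 l|) :
    ∑ l ∈ (Finset.univ.filter fun l => β0 l ≠ 0)ᶜ, |βh l| ≤
      3 * ∑ l ∈ Finset.univ.filter fun l => β0 l ≠ 0, |β0 l - βh l| := by
  haveI : Nonempty (Fin K) := ⟨⟨0, hK⟩⟩
  set S0 : Fin K → ℝ := fun ℓ =>
    Real.sqrt ((1 / n : ℝ) * ∑ i, (z i ℓ) ^ 2 * (y i - ∑ l, x i l * β0 l) ^ 2) with hS0
  set Sh : Fin K → ℝ := fun ℓ =>
    Real.sqrt ((1 / n : ℝ) * ∑ i, (z i ℓ) ^ 2 * (y i - ∑ l, x i l * βh l) ^ 2) with hSh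
  set D : ℝ := ∑ l, |βh l - β0 l| with hDdef
  have hlampos : 0 < lam := by rw [hlam]; positivity
  have hbt : BddAbove (Set.range th) := (Set.finite_range th).bddAbove
  have hbh : BddAbove (Set.range Sh) := (Set.finite_range Sh).bddAbove
  have h1 : (⨆ ℓ, Sh ℓ) ≤ ⨆ ℓ, th ℓ := ciSup_mono hbt hfeash
  have hlh : lam * Hn = 1 / 2 := by rw [hlam]; field_simp
  have h2 : (⨆ ℓ, S0 ℓ) ≤ (⨆ ℓ, Sh ℓ) + Hn * D := by
    refine ciSup_le fun ℓ => ?_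
    have h3 := abs_le.mp (hlip ℓ)
    have h4 : S0 ℓ ≤ Sh ℓ + Hn * D := by
      simp only [hS0, hSh, hDdef]
      linarith [h3.1]
    exact h4.trans (add_le_add_left (le_ciSup hbh ℓ) _)
  have h2' : lam * (⨆ ℓ, S0 ℓ) ≤ lam * (⨆ ℓ, Sh ℓ) + D / 2 :=
    calc lam * (⨆ ℓ, S0 ℓ) ≤ lam * ((⨆ ℓ, Sh ℓ) + Hn * D) :=
          mul_le_mul_of_nonneg_left h2 hlampos.le
      _ = lam * (⨆ ℓ, Sh ℓ) + (lam * Hn) * D := by ring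
      _ = lam * (⨆ ℓ, Sh ℓ) + D / 2 := by rw [hlh]; ring
  have key : (∑ l, |βh l|) ≤ (∑ l, |β0 l|) + D / 2 := by
    have h1' := mul_le_mul_of_nonneg_left h1 hlampos.le
    linarith [hopt]
  set T := Finset.univ.filter fun l : Fin p => β0 l ≠ 0 with hT
  have hβ0c : ∀ l ∈ Tᶜ, β0 l = 0 := by
    intro l hl
    simpa [hT, Finset.mem_compl, Finset.mem_filter, not_not] using hl
  have sh : ∑ l, |βh l| = ∑ l ∈ T, |βh l| + ∑ l ∈ Tᶜ, |βh l| :=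
    (Finset.sum_add_sum_compl T _).symm
  have s0 : ∑ l, |β0 l| = ∑ l ∈ T, |β0 l| + ∑ l ∈ Tᶜ, |β0 l| :=
    (Finset.sum_add_sum_compl T _).symm
  have sD : D = ∑ l ∈ T, |βh l - β0 l| + ∑ l ∈ Tᶜ, |βh l - β0 l| :=
    (Finset.sum_add_sum_compl T _).symm
  have e1 : ∑ l ∈ Tᶜ, |β0 l| = 0 :=
    Finset.sum_eq_zero fun l hl => by rw [hβ0c l hl, abs_zero]
  have e2 : ∑ l ∈ Tᶜ, |βh l - β0 l| = ∑ l ∈ Tᶜ, |βh l| :=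
    Finset.sum_congr rfl fun l hl => by rw [hβ0c l hl, sub_zero]
  have e3 : ∑ l ∈ T, |βh l - β0 l| = ∑ l ∈ T, |β0 l - βh l| :=
    Finset.sum_congr rfl fun l _ => abs_sub_comm _ _
  have e4 : ∑ l ∈ T, |β0 l| ≤ ∑ l ∈ T, |βh l| + ∑ l ∈ T, |β0 l - βh l| := by
    rw [← Finset.sum_add_distrib]
    refine Finset.sum_le_sum fun l _ => ?_
    have := abs_sub_abs_le_abs_sub (β0 l) (βh l)
    linarith
  rw [sh, s0, sD, e1, e2, e3] at key
  linarith
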